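/- If R is a polynomial ring over a field and I is a monomial ideal of R, then the conductor C(I) is a monomial ideal; and if R is a graded ring and I is a graded ideal of R, then C(I) is a graded ideal. -/

import Mathlib

noncomputable section

universe u v

/-- The `R`-algebra map `φ : T = R[y_i : i ∈ ι] → R[t]` sending `y_i ↦ f i · t`. -/
def reesHom {R : Type u} [CommRing R] {ι : Type v} (f : ι → R) :
    MvPolynomial ι R →ₐ[R] Polynomial R :=
  MvPolynomial.aeval fun i => Polynomial.C (f i) * Polynomial.X

/-- `J`, the defining ideal of the Rees algebra of the ideal generated by `f`. -/
def reesJ {R : Type u} [CommRing R] {ι : Type v} (f : ι → R) :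
    Ideal (MvPolynomial ι R) :=
  RingHom.ker (reesHom f)

/-- `L`, the ideal of `T` generated by the linear relations `∑ aᵢ yᵢ` with `∑ aᵢ fᵢ = 0`. -/
def linRel {R : Type u} [CommRing R] {ι : Type v} (f : ι → R) :
    Ideal (MvPolynomial ι R) :=
  Ideal.span {p | ∃ a : ι →₀ R, (a.sum fun i r => r * f i) = 0 ∧
    p = a.sum fun i r => MvPolynomial.C r * MvPolynomial.X i}

/-- The conductor `C(I) = L :_R J = {r ∈ R : r J ⊆ L}`. -/
def conductorIdeal {R : Type u} [CommRing R] {ι : Type v} (f : ι → R) : Ideal R :=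
  Submodule.colon (Submodule.restrictScalars R (linRel f))
    (Submodule.restrictScalars R (reesJ f))

/-- The ideal generated by `f` is of linear type if `J = L`. -/
def IsLinearType {R : Type u} [CommRing R] {ι : Type v} (f : ι → R) : Prop :=
  reesJ f = linRel f

end

noncomputable section
set_option linter.unusedSectionVars false
open DirectSum

namespace Stmt8Aux

variable {R : Type*} [CommRing R] {M : Type*} [AddCancelCommMonoid M] [DecidableEq M]
  {σ : Type*} [SetLike σ R] [AddSubmonoidClass σ R] (𝒜 : M → σ) [GradedRing 𝒜]

def coactAux : (⨁ g, 𝒜 g) →+* AddMonoidAlgebra R M :=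
  DirectSum.toSemiring
    (fun g => (AddMonoidAlgebra.singleAddHom g).comp (AddSubmonoidClass.subtype (𝒜 g)))
    (by
      simp only [AddMonoidHom.comp_apply, AddMonoidAlgebra.singleAddHom_apply]
      rw [AddMonoidAlgebra.one_def]
      congr 1)
    (fun {i j} ai aj => by
      simp only [AddMonoidHom.comp_apply, AddMonoidAlgebra.singleAddHom_apply]
      rw [AddMonoidAlgebra.single_mul_single]
      congr 1)

/-- The coaction `R →+* R[M]`, `x ↦ ∑ x_g t^g`. -/
def coact : R →+* AddMonoidAlgebra R M :=
  (coactAux 𝒜).comp (DirectSum.decomposeRingEquiv 𝒜 : R →+* ⨁ g, 𝒜 g)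

theorem coact_eq (x : R) : coact 𝒜 x = coactAux 𝒜 (DirectSum.decompose 𝒜 x) := rfl

theorem coact_of_mem {g : M} {x : R} (hx : x ∈ 𝒜 g) :
    coact 𝒜 x = AddMonoidAlgebra.single g x := by
  rw [coact_eq, DirectSum.decompose_of_mem 𝒜 hx, coactAux, DirectSum.toSemiring_of]
  rfl

theorem coact_apply (x : R) (g : M) :
    (coact 𝒜 x).coeff g = (DirectSum.decompose 𝒜 x g : R) := by
  induction x using DirectSum.Decomposition.inductionOn 𝒜 with
  | zero => simp
  | @homogeneous h y =>
      obtain ⟨y, hy⟩ := y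
      rw [coact_of_mem 𝒜 hy]
      by_cases hgh : h = g
      · subst hgh
        rw [DirectSum.decompose_of_mem_same 𝒜 hy]
        simp [Finsupp.single_apply]
      · rw [DirectSum.decompose_of_mem_ne 𝒜 hy hgh]
        simp [Finsupp.single_apply, hgh]
  | add x y hx hy =>
      have h1 : (coact 𝒜 (x + y)).coeff g = (coact 𝒜 x).coeff g + (coact 𝒜 y).coeff g := by
        rw [map_add]; rfl
      rw [h1, hx, hy, DirectSum.decompose_add, DirectSum.add_apply]
      push_cast
      ring

section MapCoeff
variable {S : Type*} [CommRing S]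

/-- Apply a ring hom coefficientwise to `AddMonoidAlgebra`. -/
def mapCoeff (φ : R →+* S) : AddMonoidAlgebra R M →+* AddMonoidAlgebra S M :=
  AddMonoidAlgebra.liftNCRingHom (AddMonoidAlgebra.singleZeroRingHom.comp φ)
    (AddMonoidAlgebra.of S M) fun _ _ => Commute.all _ _

theorem mapCoeff_single (φ : R →+* S) (g : M) (c : R) :
    mapCoeff φ (AddMonoidAlgebra.single g c) = AddMonoidAlgebra.single g (φ c) := by
  rw [mapCoeff, AddMonoidAlgebra.liftNCRingHom]
  show AddMonoidAlgebra.liftNC _ _ _ = _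
  rw [AddMonoidAlgebra.liftNC_single]
  show AddMonoidAlgebra.single 0 (φ c) * AddMonoidAlgebra.single g 1 = _
  rw [AddMonoidAlgebra.single_mul_single, zero_add, mul_one]

theorem mapCoeff_apply (φ : R →+* S) (q : AddMonoidAlgebra R M) (g : M) :
    (mapCoeff φ q).coeff g = φ (q.coeff g) := by
  induction q using AddMonoidAlgebra.induction_linear with
  | zero => simp
  | add p q hp hq =>
      have h1 : (mapCoeff φ (p + q)).coeff g = (mapCoeff φ p).coeff g + (mapCoeff φ q).coeff g := by
        rw [map_add]; rfl
      rw [h1, hp, hq, ← map_add]; rfl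
  | single a b =>
      rw [mapCoeff_single]
      show Finsupp.single a (φ b) g = φ (Finsupp.single a b g)
      rcases eq_or_ne a g with h | h
      · subst h; simp
      · simp [Finsupp.single_apply, h]

end MapCoeff

section Psi

variable {ι : Type*} (d : ι → M)

/-- The coaction on `T = R[y_i]`, with `y_i` in degree `d i`. -/
def psi : MvPolynomial ι R →+* AddMonoidAlgebra (MvPolynomial ι R) M :=
  MvPolynomial.eval₂Hom ((mapCoeff (MvPolynomial.C : R →+* MvPolynomial ι R)).comp (coact 𝒜))
    fun i => AddMonoidAlgebra.single (d i) (MvPolynomial.X i)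

theorem psi_C (r : R) :
    psi 𝒜 d (MvPolynomial.C r) = mapCoeff MvPolynomial.C (coact 𝒜 r) :=
  MvPolynomial.eval₂Hom_C _ _ r

theorem psi_X (i : ι) :
    psi 𝒜 d (MvPolynomial.X i) = AddMonoidAlgebra.single (d i) (MvPolynomial.X i) :=
  MvPolynomial.eval₂Hom_X' _ _ i

/-- Summing all coefficients of an element of `T[M]`. -/
def eps : AddMonoidAlgebra (MvPolynomial ι R) M →+* MvPolynomial ι R :=
  AddMonoidAlgebra.liftNCRingHom (RingHom.id _) 1 fun _ _ => Commute.all _ _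

theorem eps_single (g : M) (c : MvPolynomial ι R) :
    eps (AddMonoidAlgebra.single g c) = c := by
  rw [eps, AddMonoidAlgebra.liftNCRingHom]
  show AddMonoidAlgebra.liftNC _ _ _ = _
  rw [AddMonoidAlgebra.liftNC_single]
  simp

theorem eps_mapCoeff_coact (x : R) :
    eps (mapCoeff (MvPolynomial.C : R →+* MvPolynomial ι R) (coact 𝒜 x)) = MvPolynomial.C x := by
  induction x using DirectSum.Decomposition.inductionOn 𝒜 with
  | zero => simp
  | @homogeneous h y =>
      obtain ⟨y, hy⟩ := y
      rw [coact_of_mem 𝒜 hy, mapCoeff_single, eps_single]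
  | add x y hx hy => rw [map_add, map_add, map_add, hx, hy, map_add]

theorem eps_psi (p : MvPolynomial ι R) : eps (psi 𝒜 d p) = p := by
  have : (eps.comp (psi 𝒜 d) : MvPolynomial ι R →+* MvPolynomial ι R) = RingHom.id _ := by
    apply MvPolynomial.ringHom_ext
    · intro r
      simp only [RingHom.comp_apply, RingHom.id_apply, psi_C]
      exact eps_mapCoeff_coact 𝒜 r
    · intro i
      simp only [RingHom.comp_apply, RingHom.id_apply, psi_X]
      exact eps_single _ _
  exact RingHom.congr_fun this p

theorem eps_eq_sum (q : AddMonoidAlgebra (MvPolynomial ι R) M) :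
    eps q = q.coeff.sum fun _ c => c := by
  induction q using AddMonoidAlgebra.induction_linear with
  | zero => simp
  | add p q hp hq => rw [map_add, hp, hq, AddMonoidAlgebra.coeff_add, Finsupp.sum_add_index] <;> simp
  | single a b =>
      rw [eps_single, AddMonoidAlgebra.coeff_single, Finsupp.sum_single_index rfl]

theorem sum_psi (p : MvPolynomial ι R) :
    ((psi 𝒜 d p).coeff.sum fun _ c => c) = p := by
  rw [← eps_eq_sum, eps_psi]

end Psi

section Main

variable {ι : Type*} (d : ι → M) (f : ι → R)

/-- Comultiplication-style map `T[M] → (T[M])[M]`, `c t^g ↦ (c t^g) t^g`. -/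
def delta : AddMonoidAlgebra (MvPolynomial ι R) M →+*
    AddMonoidAlgebra (AddMonoidAlgebra (MvPolynomial ι R) M) M :=
  AddMonoidAlgebra.liftNCRingHom
    (AddMonoidAlgebra.singleZeroRingHom.comp AddMonoidAlgebra.singleZeroRingHom)
    { toFun := fun g => AddMonoidAlgebra.single g.toAdd (AddMonoidAlgebra.single g.toAdd 1)
      map_one' := by
        rw [AddMonoidAlgebra.one_def, AddMonoidAlgebra.one_def]; rfl
      map_mul' := fun x y => by
        rw [AddMonoidAlgebra.single_mul_single, AddMonoidAlgebra.single_mul_single, one_mul]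
        rfl }
    fun _ _ => Commute.all (S := AddMonoidAlgebra (AddMonoidAlgebra (MvPolynomial ι R) M) M) _ _

theorem delta_single (g : M) (c : MvPolynomial ι R) :
    delta (AddMonoidAlgebra.single g c) = AddMonoidAlgebra.single g
      (AddMonoidAlgebra.single g c) := by
  rw [delta, AddMonoidAlgebra.liftNCRingHom]
  show AddMonoidAlgebra.liftNC _ _ _ = _
  rw [AddMonoidAlgebra.liftNC_single]
  show AddMonoidAlgebra.single 0 (AddMonoidAlgebra.single 0 c) *
      AddMonoidAlgebra.single g (AddMonoidAlgebra.single g 1) = _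
  rw [AddMonoidAlgebra.single_mul_single, AddMonoidAlgebra.single_mul_single]
  simp

theorem delta_apply (q : AddMonoidAlgebra (MvPolynomial ι R) M) (g : M) :
    (delta q).coeff g = AddMonoidAlgebra.single g (q.coeff g) := by
  induction q using AddMonoidAlgebra.induction_linear with
  | zero => simp
  | add p q hp hq =>
      have h1 : (delta (p + q)).coeff g = (delta p).coeff g + (delta q).coeff g := by rw [map_add]; rfl
      have h2 : (p + q).coeff g = p.coeff g + q.coeff g := rfl
      rw [h1, hp, hq, h2, AddMonoidAlgebra.single_add]
  | single a b =>
      rw [delta_single]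
      show Finsupp.single a (AddMonoidAlgebra.single a b) g
          = AddMonoidAlgebra.single g (Finsupp.single a b g)
      rcases eq_or_ne a g with h | h
      · subst h; simp
      · rw [Finsupp.single_apply, Finsupp.single_apply, if_neg h, if_neg h]
        simp

theorem coassoc (p : MvPolynomial ι R) (g : M) :
    psi 𝒜 d ((psi 𝒜 d p).coeff g) = AddMonoidAlgebra.single g ((psi 𝒜 d p).coeff g) := by
  have key : (mapCoeff (psi 𝒜 d)).comp (psi 𝒜 d) = (delta).comp (psi 𝒜 d) := by
    apply MvPolynomial.ringHom_ext
    · intro r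
      simp only [RingHom.comp_apply, psi_C]
      induction r using DirectSum.Decomposition.inductionOn 𝒜 with
      | zero => simp
      | @homogeneous h y =>
          obtain ⟨y, hy⟩ := y
          rw [coact_of_mem 𝒜 hy, mapCoeff_single, mapCoeff_single, delta_single, psi_C,
            coact_of_mem 𝒜 hy, mapCoeff_single]
      | add x y hx hy => rw [map_add, map_add, map_add, map_add, hx, hy]
    · intro i
      simp only [RingHom.comp_apply, psi_X]
      rw [mapCoeff_single, delta_single, psi_X]
  have := RingHom.congr_fun key p
  simp only [RingHom.comp_apply] at this
  calc psi 𝒜 d ((psi 𝒜 d p).coeff g) = (mapCoeff (psi 𝒜 d) (psi 𝒜 d p)).coeff g := by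
        rw [mapCoeff_apply]
    _ = (delta (psi 𝒜 d p)).coeff g := by rw [this]
    _ = AddMonoidAlgebra.single g ((psi 𝒜 d p).coeff g) := delta_apply _ _

/-- The coaction on `R[t]`, with `t` in degree `0`. -/
def chi : Polynomial R →+* AddMonoidAlgebra (Polynomial R) M :=
  Polynomial.eval₂RingHom ((mapCoeff (Polynomial.C : R →+* Polynomial R)).comp (coact 𝒜))
    (AddMonoidAlgebra.single 0 Polynomial.X)

theorem square (hf : ∀ i, f i ∈ 𝒜 (d i)) :
    (mapCoeff ((reesHom f : MvPolynomial ι R →ₐ[R] Polynomial R) :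
        MvPolynomial ι R →+* Polynomial R)).comp (psi 𝒜 d)
      = (chi 𝒜).comp ((reesHom f : MvPolynomial ι R →ₐ[R] Polynomial R) :
        MvPolynomial ι R →+* Polynomial R) := by
  apply MvPolynomial.ringHom_ext
  have hC : ∀ r : R, (reesHom f) (MvPolynomial.C r) = Polynomial.C r := fun r => by
    simp [reesHom]
  · intro r
    simp only [RingHom.comp_apply, psi_C, RingHom.coe_coe, hC]
    rw [chi, Polynomial.coe_eval₂RingHom, Polynomial.eval₂_C]
    simp only [RingHom.comp_apply]
    induction r using DirectSum.Decomposition.inductionOn 𝒜 with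
    | zero => simp
    | @homogeneous h y =>
        obtain ⟨y, hy⟩ := y
        rw [coact_of_mem 𝒜 hy, mapCoeff_single, mapCoeff_single, mapCoeff_single, RingHom.coe_coe,
          hC y]
    | add x y hx hy => rw [map_add, map_add, map_add, map_add, hx, hy]
  · intro i
    have hX : (reesHom f) (MvPolynomial.X i) = Polynomial.C (f i) * Polynomial.X := by
      simp [reesHom]
    simp only [RingHom.comp_apply, psi_X, RingHom.coe_coe, hX]
    rw [mapCoeff_single, RingHom.coe_coe, hX]
    rw [chi, Polynomial.coe_eval₂RingHom, Polynomial.eval₂_mul, Polynomial.eval₂_C,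
      Polynomial.eval₂_X]
    simp only [RingHom.comp_apply]
    rw [coact_of_mem 𝒜 (hf i), mapCoeff_single, AddMonoidAlgebra.single_mul_single, add_zero]

theorem psi_mem_reesJ (hf : ∀ i, f i ∈ 𝒜 (d i)) {p : MvPolynomial ι R}
    (hp : p ∈ reesJ f) (g : M) : (psi 𝒜 d p).coeff g ∈ reesJ f := by
  have hker : (reesHom f) p = 0 := hp
  have h1 := RingHom.congr_fun (square 𝒜 d f hf) p
  simp only [RingHom.comp_apply, RingHom.coe_coe, hker, map_zero] at h1
  have h2 : ((reesHom f : MvPolynomial ι R →ₐ[R] Polynomial R) :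
      MvPolynomial ι R →+* Polynomial R) ((psi 𝒜 d p).coeff g) = 0 := by
    rw [← mapCoeff_apply, h1]
    rfl
  exact h2

theorem ama_add_apply {k : Type*} [Semiring k] (p q : AddMonoidAlgebra k M) (g : M) :
    (p + q).coeff g = p.coeff g + q.coeff g := rfl

theorem ama_zero_apply {k : Type*} [Semiring k] (g : M) :
    (0 : AddMonoidAlgebra k M).coeff g = 0 := rfl

theorem mul_single_apply_comm (q : AddMonoidAlgebra R M) (x : M) (c : R) (g : M) :
    (q * AddMonoidAlgebra.single x c : AddMonoidAlgebra R M).coeff g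
      = (q * AddMonoidAlgebra.single x 1 : AddMonoidAlgebra R M).coeff g * c := by
  induction q using AddMonoidAlgebra.induction_linear with
  | zero => simp
  | add p q hp hq =>
      rw [add_mul, add_mul, ama_add_apply, ama_add_apply, hp, hq, add_mul]
  | single a b =>
      rw [AddMonoidAlgebra.single_mul_single, AddMonoidAlgebra.single_mul_single]
      show Finsupp.single (a + x) (b * c) g = Finsupp.single (a + x) (b * 1) g * c
      rw [Finsupp.single_apply, Finsupp.single_apply]
      split_ifs <;> simp

theorem claim1 (r : R) (i : ι) (g : M) :
    ((mapCoeff (MvPolynomial.C : R →+* MvPolynomial ι R) (coact 𝒜 r))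
        * AddMonoidAlgebra.single (d i) (MvPolynomial.X i)
        : AddMonoidAlgebra (MvPolynomial ι R) M).coeff g
      = MvPolynomial.C ((coact 𝒜 r * AddMonoidAlgebra.single (d i) (1 : R)
          : AddMonoidAlgebra R M).coeff g)
        * MvPolynomial.X i := by
  induction r using DirectSum.Decomposition.inductionOn 𝒜 with
  | zero => simp
  | @homogeneous h y =>
      obtain ⟨y, hy⟩ := y
      rw [coact_of_mem 𝒜 hy, mapCoeff_single, AddMonoidAlgebra.single_mul_single,
        AddMonoidAlgebra.single_mul_single]
      show Finsupp.single (h + d i) (MvPolynomial.C y * MvPolynomial.X i) g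
          = MvPolynomial.C (Finsupp.single (h + d i) (y * 1) g) * MvPolynomial.X i
      rw [Finsupp.single_apply, Finsupp.single_apply]
      split_ifs <;> simp
  | add x y hx hy =>
      rw [map_add, map_add, add_mul, add_mul, ama_add_apply, ama_add_apply, hx, hy, map_add,
        add_mul]

theorem claim2 (hf : ∀ i, f i ∈ 𝒜 (d i)) (r : R) (i : ι) (g : M) :
    (coact 𝒜 (r * f i)).coeff g
      = (coact 𝒜 r * AddMonoidAlgebra.single (d i) (1 : R) : AddMonoidAlgebra R M).coeff g * f i := by
  rw [map_mul, coact_of_mem 𝒜 (hf i), mul_single_apply_comm]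

theorem psi_mem_linRel (hf : ∀ i, f i ∈ 𝒜 (d i)) {p : MvPolynomial ι R}
    (hp : p ∈ linRel f) (g : M) : (psi 𝒜 d p).coeff g ∈ linRel f := by
  classical
  rw [linRel] at hp
  refine Submodule.span_induction
    (p := fun x _ => ∀ g : M, (psi 𝒜 d x).coeff g ∈ linRel f) ?_ ?_ ?_ ?_ hp g
  · rintro s ⟨a, ha0, rfl⟩ g
    set b : ι →₀ R := Finsupp.onFinset a.support
      (fun i => (coact 𝒜 (a i) * AddMonoidAlgebra.single (d i) (1 : R)
        : AddMonoidAlgebra R M).coeff g)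
      (fun i hi => by
        by_contra hmem
        rw [Finsupp.notMem_support_iff] at hmem
        apply hi
        show (coact 𝒜 (a i) * AddMonoidAlgebra.single (d i) (1 : R)
          : AddMonoidAlgebra R M).coeff g = 0
        rw [hmem, map_zero, zero_mul]
        rfl) with hb
    have hpsi : (psi 𝒜 d (a.sum fun i r => MvPolynomial.C r * MvPolynomial.X i)).coeff g
        = ∑ i ∈ a.support, MvPolynomial.C (b i) * MvPolynomial.X i := by
      rw [map_finsuppSum, AddMonoidAlgebra.coeff_finsuppSum, Finsupp.sum_apply, Finsupp.sum]
      refine Finset.sum_congr rfl fun i hi => ?_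
      rw [map_mul, psi_C, psi_X, claim1]
      rfl
    rw [hpsi]
    apply Ideal.subset_span
    refine ⟨b, ?_, ?_⟩
    · rw [Finsupp.onFinset_sum _ fun i => zero_mul (f i)]
      have step1 : ∑ i ∈ a.support,
          (coact 𝒜 (a i) * AddMonoidAlgebra.single (d i) (1 : R)
            : AddMonoidAlgebra R M).coeff g * f i
          = ∑ i ∈ a.support, (coact 𝒜 (a i * f i)).coeff g :=
        Finset.sum_congr rfl fun i _ => (claim2 𝒜 d f hf (a i) i g).symm
      have step2 : ∑ i ∈ a.support, (coact 𝒜 (a i * f i)).coeff g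
          = ((a.sum fun i r => coact 𝒜 (r * f i)) : AddMonoidAlgebra R M).coeff g := by
        rw [AddMonoidAlgebra.coeff_finsuppSum, Finsupp.sum_apply, Finsupp.sum]
      have step3 : ((a.sum fun i r => coact 𝒜 (r * f i)) : AddMonoidAlgebra R M)
          = coact 𝒜 (a.sum fun i r => r * f i) := (map_finsuppSum _ _ _).symm
      show ∑ i ∈ a.support,
          (coact 𝒜 (a i) * AddMonoidAlgebra.single (d i) (1 : R)
            : AddMonoidAlgebra R M).coeff g * f i = 0
      rw [step1, step2, step3, ha0, map_zero]
      rfl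
    · rw [Finsupp.onFinset_sum _ fun i => by rw [map_zero, zero_mul]]
      exact Finset.sum_congr rfl fun i hi => rfl
  · intro g
    rw [map_zero]
    show (0 : M →₀ MvPolynomial ι R) g ∈ linRel f
    rw [Finsupp.zero_apply]
    exact Submodule.zero_mem _
  · intro x y _ _ ihx ihy g
    have : (psi 𝒜 d (x + y)).coeff g = (psi 𝒜 d x).coeff g + (psi 𝒜 d y).coeff g := by rw [map_add]; rfl
    rw [this]
    exact Submodule.add_mem _ (ihx g) (ihy g)
  · intro t x _ ihx g
    have hmul : psi 𝒜 d (t • x) = psi 𝒜 d t * psi 𝒜 d x := by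
      rw [smul_eq_mul, map_mul]
    rw [hmul, AddMonoidAlgebra.mul_apply, Finsupp.sum]
    refine Submodule.sum_mem _ fun a₁ _ => ?_
    rw [Finsupp.sum]
    refine Submodule.sum_mem _ fun a₂ _ => ?_
    split_ifs
    · exact Ideal.mul_mem_left _ _ (ihx a₂)
    · exact Submodule.zero_mem _

theorem conductor_mem (hf : ∀ i, f i ∈ 𝒜 (d i)) {r : R} (hr : r ∈ conductorIdeal f) (g : M) :
    (DirectSum.decompose 𝒜 r g : R) ∈ conductorIdeal f := by
  classical
  rw [conductorIdeal, Submodule.mem_colon] at hr ⊢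
  intro p hp
  rw [SetLike.mem_coe, Submodule.restrictScalars_mem] at hp
  have hsum : p = ∑ g' ∈ (psi 𝒜 d p).coeff.support, (psi 𝒜 d p).coeff g' := by
    conv_lhs => rw [← sum_psi 𝒜 d p]
    rw [Finsupp.sum]
  rw [Submodule.restrictScalars_mem, hsum, Finset.smul_sum]
  refine Submodule.sum_mem _ fun g' _ => ?_
  set j' : MvPolynomial ι R := (psi 𝒜 d p).coeff g' with hj'def
  have hj' : j' ∈ reesJ f := psi_mem_reesJ 𝒜 d f hf hp g'
  have h1 : MvPolynomial.C r * j' ∈ linRel f := by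
    have := hr j' (Submodule.restrictScalars_mem _ _ _ |>.mpr hj')
    rw [Submodule.restrictScalars_mem, MvPolynomial.smul_eq_C_mul] at this
    exact this
  have h2 := psi_mem_linRel 𝒜 d f hf h1 (g + g')
  have h3 : psi 𝒜 d (MvPolynomial.C r * j')
      = mapCoeff (MvPolynomial.C : R →+* MvPolynomial ι R) (coact 𝒜 r)
        * AddMonoidAlgebra.single g' j' := by
    rw [map_mul, psi_C, coassoc]
  have h4 : (psi 𝒜 d (MvPolynomial.C r * j')).coeff (g + g')
      = MvPolynomial.C ((DirectSum.decompose 𝒜 r g : R)) * j' := by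
    rw [h3]
    rw [AddMonoidAlgebra.coeff_mul_single_eq_coeff_mul g fun a _ => add_left_inj g']
    rw [mapCoeff_apply, coact_apply]
  rw [h4] at h2
  rw [MvPolynomial.smul_eq_C_mul]
  exact h2

end Main

end Stmt8Aux

instance finsuppAddCancelCommMonoid {α N : Type*} [AddCancelCommMonoid N] :
    AddCancelCommMonoid (α →₀ N) :=
  { (inferInstance : AddCommMonoid (α →₀ N)) with
    add_left_cancel := fun a b c h => Finsupp.ext fun i => by
      have := DFunLike.congr_fun h i
      simp only [Finsupp.add_apply] at this
      exact add_left_cancel this }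

theorem weight_diag {n : ℕ} (s : Fin n →₀ ℕ) :
    (Finsupp.weight fun i : Fin n => Finsupp.single i (1 : ℕ)) s = s := by
  rw [Finsupp.weight_apply]
  conv_rhs => rw [← Finsupp.sum_single s]
  exact Finsupp.sum_congr fun i _ => by rw [Finsupp.smul_single, smul_eq_mul, mul_one]


end

/-- (i) If `R` is a polynomial ring over a field and `I` is a
monomial ideal (with monomial generators `f`), then `C(I)` is a monomial ideal.
(ii) If `R` is a graded ring and `I` is a graded ideal (with homogeneous
generators `f`), then `C(I)` is a graded ideal. -/
theorem stmt_8 :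
    (∀ (K : Type) [Field K] (n : ℕ) {m : ℕ}
      (f : Fin m → MvPolynomial (Fin n) K),
      (∀ j, ∃ s : Fin n →₀ ℕ, f j = MvPolynomial.monomial s 1) →
      ∀ I : Ideal (MvPolynomial (Fin n) K), I = Ideal.span (Set.range f) →
        ∃ S : Set (Fin n →₀ ℕ),
          conductorIdeal f =
            Ideal.span ((fun s => (MvPolynomial.monomial s (1 : K))) '' S)) ∧
    (∀ (R : Type) [CommRing R] (𝒜 : ℕ → Submodule ℤ R) [GradedRing 𝒜] {m : ℕ}
      (f : Fin m → R), (∀ j, SetLike.IsHomogeneousElem 𝒜 (f j)) →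
      ∀ I : Ideal R, I = Ideal.span (Set.range f) → I.IsHomogeneous 𝒜 →
        (conductorIdeal f).IsHomogeneous 𝒜) := by
  constructor
  · intro K _ n m f hmono I hI
    classical
    set w : Fin n → (Fin n →₀ ℕ) := fun i => Finsupp.single i 1 with hw
    set 𝒜 := MvPolynomial.weightedHomogeneousSubmodule K w with h𝒜
    letI : GradedAlgebra 𝒜 := MvPolynomial.weightedGradedAlgebra K w
    set d : Fin m → (Fin n →₀ ℕ) := fun j => (hmono j).choose with hd
    have hf : ∀ j, f j ∈ 𝒜 (d j) := fun j => by
      rw [h𝒜, MvPolynomial.mem_weightedHomogeneousSubmodule, (hmono j).choose_spec]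
      exact MvPolynomial.isWeightedHomogeneous_monomial w _ _ (weight_diag _)
    refine ⟨{s | MvPolynomial.monomial s (1 : K) ∈ conductorIdeal f}, le_antisymm ?_ ?_⟩
    · intro p hp
      rw [← DirectSum.sum_support_decompose 𝒜 p]
      refine Submodule.sum_mem _ fun s hs => ?_
      set q : MvPolynomial (Fin n) K := (DirectSum.decompose 𝒜 p s : MvPolynomial (Fin n) K)
        with hq
      have hqC : q ∈ conductorIdeal f := Stmt8Aux.conductor_mem 𝒜 d f hf hp s
      have hqh : MvPolynomial.IsWeightedHomogeneous w q s :=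
        (MvPolynomial.mem_weightedHomogeneousSubmodule _ _ _ _).mp (SetLike.coe_mem _)
      set c := MvPolynomial.coeff s q with hcdef
      have hqm : q = MvPolynomial.monomial s c := by
        apply MvPolynomial.ext
        intro e
        rw [MvPolynomial.coeff_monomial]
        rcases eq_or_ne s e with h | h
        · rw [if_pos h, hcdef, h]
        · rw [if_neg h]
          by_contra hne
          exact h ((weight_diag e ▸ hqh hne).symm)
      by_cases hc : c = 0
      · rw [hqm, hc, map_zero]
        exact Submodule.zero_mem _
      · have h1 : MvPolynomial.monomial s (1 : K) ∈ conductorIdeal f := by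
          have h2 : MvPolynomial.monomial s (1 : K)
              = MvPolynomial.C c⁻¹ * q := by
            rw [hqm, MvPolynomial.C_mul_monomial, inv_mul_cancel₀ hc]
          rw [h2]
          exact Ideal.mul_mem_left _ _ hqC
        have h3 : q = MvPolynomial.C c
            * MvPolynomial.monomial s (1 : K) := by
          rw [MvPolynomial.C_mul_monomial, mul_one]
          exact hqm
        rw [h3]
        exact Ideal.mul_mem_left _ _ (Ideal.subset_span ⟨s, h1, rfl⟩)
    · rw [Ideal.span_le]
      rintro _ ⟨s, hs, rfl⟩
      exact hs
  · intro R _ 𝒜 _ m f hfhom I hI hIhom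
    intro i r hr
    exact Stmt8Aux.conductor_mem 𝒜 (fun j => (hfhom j).choose) f
      (fun j => (hfhom j).choose_spec) hr i
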